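/- lim_{N→∞} (1/(N·ln N)) · ∑_{n=1}^{N} (3 − 4cos θ_n + cos²θ_n)^{−1/2} = 1/π, where θ_n = π(2n−1)/(2N). -/

import Mathlib

open Filter Finset

theorem upper_bd (u : ℝ) (h0 : 0 < u) (h2 : u ≤ Real.pi/2) :
    (2 * Real.sin u * Real.sqrt (1 + Real.sin u ^ 2))⁻¹ ≤ (2*u)⁻¹ + 1 := by
  have hs : 0 < Real.sin u := Real.sin_pos_of_pos_of_lt_pi h0 (by linarith [Real.pi_pos])
  have hsq : (1:ℝ) ≤ Real.sqrt (1 + Real.sin u ^ 2) := by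
    nlinarith [Real.sq_sqrt (show (0:ℝ) ≤ 1 + Real.sin u^2 by positivity),
      Real.sqrt_nonneg (1 + Real.sin u^2)]
  have step1 : (2 * Real.sin u * Real.sqrt (1 + Real.sin u ^ 2))⁻¹ ≤ (2 * Real.sin u)⁻¹ := by
    apply inv_anti₀ (by positivity)
    nlinarith
  refine step1.trans ?_
  rcases le_or_gt u 1 with hu1 | hu1
  · have hcube := Real.sin_gt_sub_cube h0
    have : (2*u)⁻¹ + 1 = (1+2*u)/(2*u) := by field_simp
    rw [this, inv_eq_one_div, div_le_div_iff₀ (by positivity) (by positivity)]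
    have hu32 : u^3 ≤ u^2 := by nlinarith
    have hu42 : u^4 ≤ u^2 := by nlinarith
    nlinarith [mul_pos (show (0:ℝ) < 1 + 2*u by linarith) (sub_pos.2 hcube), sq_nonneg u]
  · have hsin1 : (3:ℝ)/4 < Real.sin 1 := by
      have := Real.sin_gt_sub_cube one_pos
      norm_num at this; linarith
    have hmono : Real.sin 1 ≤ Real.sin u := by
      rcases eq_or_lt_of_le (le_of_lt hu1) with h | h
      · rw [← h]
      · exact le_of_lt (Real.sin_lt_sin_of_lt_of_le_pi_div_two
          (by linarith [Real.pi_gt_three]) h2 h)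
    have h32 : (3:ℝ)/2 ≤ 2 * Real.sin u := by linarith
    have hinv := inv_anti₀ (show (0:ℝ) < 3/2 by norm_num) h32
    have h1 : (0:ℝ) < (2*u)⁻¹ := by positivity
    have e : ((3:ℝ)/2)⁻¹ = 2/3 := by norm_num
    rw [e] at hinv
    linarith

theorem lower_bd (u : ℝ) (h0 : 0 < u) (h2 : u ≤ Real.pi/2) :
    (2*u)⁻¹ - 1 ≤ (2 * Real.sin u * Real.sqrt (1 + Real.sin u ^ 2))⁻¹ := by
  have hs : 0 < Real.sin u := Real.sin_pos_of_pos_of_lt_pi h0 (by linarith [Real.pi_pos])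
  have hsu : Real.sin u ≤ u := le_of_lt (Real.sin_lt h0)
  have hsq : Real.sqrt (1 + Real.sin u ^ 2) ≤ 1 + u^2/2 := by
    rw [show (1:ℝ) + u^2/2 = Real.sqrt ((1+u^2/2)^2) from (Real.sqrt_sq (by positivity)).symm]
    apply Real.sqrt_le_sqrt
    nlinarith
  have hden : 2 * Real.sin u * Real.sqrt (1 + Real.sin u ^ 2) ≤ 2 * u * (1 + u^2/2) := by
    have h1 : (0:ℝ) ≤ Real.sqrt (1 + Real.sin u ^ 2) := Real.sqrt_nonneg _
    nlinarith
  have hpos : (0:ℝ) < 2 * Real.sin u * Real.sqrt (1 + Real.sin u ^ 2) := by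
    have : (0:ℝ) < Real.sqrt (1 + Real.sin u ^ 2) := Real.sqrt_pos.2 (by positivity)
    positivity
  have step1 : (2 * u * (1 + u^2/2))⁻¹ ≤ (2 * Real.sin u * Real.sqrt (1 + Real.sin u ^ 2))⁻¹ :=
    inv_anti₀ hpos hden
  refine le_trans ?_ step1
  have hupi : u ≤ 2 := by nlinarith [Real.pi_lt_d2]
  have h3 : (1 - u^2/2) ≤ (1 + u^2/2)⁻¹ := by
    rw [inv_eq_one_div, le_div_iff₀ (by positivity)]
    nlinarith
  have key : (2 * u * (1 + u^2/2))⁻¹ = (2*u)⁻¹ * (1 + u^2/2)⁻¹ := by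
    rw [mul_inv]
  rw [key]
  have h4 : (2*u)⁻¹ * (1 - u^2/2) ≤ (2*u)⁻¹ * (1 + u^2/2)⁻¹ :=
    mul_le_mul_of_nonneg_left h3 (by positivity)
  refine le_trans ?_ h4
  have : (2*u)⁻¹ * (1 - u^2/2) = (2*u)⁻¹ - u/4 := by
    field_simp; ring
  rw [this]
  linarith

theorem odd_harm (N : ℕ) :
    ∑ n ∈ Finset.Icc 1 N, (2*(n:ℝ)-1)⁻¹ = (harmonic (2*N) : ℝ) - (harmonic N : ℝ)/2 := by
  induction N with
  | zero => simp
  | succ N ih =>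
    rw [Finset.sum_Icc_succ_top (by omega : 1 ≤ N+1), ih]
    have h1 : 2*(N+1) = (2*N + 1) + 1 := by ring
    rw [h1, harmonic_succ, harmonic_succ, harmonic_succ]
    push_cast
    have hN1 : ((N:ℝ)+1) ≠ 0 := by positivity
    have h2 : (2*(N:ℝ)+1) ≠ 0 := by positivity
    have h3 : (2*(N:ℝ)+1+1) ≠ 0 := by positivity
    have h4 : (2*((N:ℝ)+1)-1) ≠ 0 := by nlinarith [Nat.cast_nonneg (α := ℝ) N]
    field_simp
    ring

theorem odd_harm_log :
    Tendsto (fun N : ℕ => (∑ n ∈ Finset.Icc 1 N, (2*(n:ℝ)-1)⁻¹) / Real.log N)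
      atTop (nhds (1/2)) := by
  have hlog : Tendsto (fun N : ℕ => Real.log N) atTop atTop :=
    Real.tendsto_log_atTop.comp tendsto_natCast_atTop_atTop
  have h2N : Tendsto (fun N : ℕ => 2*N) atTop atTop :=
    tendsto_atTop_mono (fun n => by simp only [id_eq]; omega) (tendsto_id (α := ℕ))
  have hγ2 : Tendsto (fun N : ℕ => (harmonic (2*N) : ℝ) - Real.log ((2*N : ℕ) : ℝ)) atTop
      (nhds Real.eulerMascheroniConstant) := Real.tendsto_harmonic_sub_log.comp h2N
  have hγ : Tendsto (fun N : ℕ => (harmonic N : ℝ) - Real.log N) atTop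
      (nhds Real.eulerMascheroniConstant) := Real.tendsto_harmonic_sub_log
  have t1 : Tendsto (fun N : ℕ => ((harmonic (2*N) : ℝ) - Real.log ((2*N : ℕ) : ℝ)) / Real.log N)
      atTop (nhds 0) := hγ2.div_atTop hlog
  have t2 : Tendsto (fun N : ℕ => ((harmonic N : ℝ) - Real.log N) / Real.log N)
      atTop (nhds 0) := hγ.div_atTop hlog
  have t3 : Tendsto (fun N : ℕ => Real.log 2 / Real.log N) atTop (nhds 0) :=
    tendsto_const_nhds.div_atTop hlog
  have comb : Tendsto (fun N : ℕ =>
      ((harmonic (2*N) : ℝ) - Real.log ((2*N : ℕ) : ℝ)) / Real.log N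
        + (Real.log 2 / Real.log N + 1)
        - (1/2) * (((harmonic N : ℝ) - Real.log N) / Real.log N)
        - 1/2) atTop (nhds (0 + (0 + 1) - (1/2)*0 - 1/2)) :=
    (((t1.add (t3.add tendsto_const_nhds)).sub (t2.const_mul (1/2))).sub tendsto_const_nhds)
  norm_num at comb
  apply comb.congr'
  filter_upwards [eventually_ge_atTop 2] with N hN
  have hN0 : (0:ℝ) < N := by positivity
  have hlogN : Real.log N ≠ 0 := by
    have : (1:ℝ) < N := by exact_mod_cast Nat.lt_of_lt_of_le one_lt_two hN
    exact ne_of_gt (Real.log_pos this)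
  have hlog2N : Real.log (2*(N:ℕ)) = Real.log 2 + Real.log N := by
    push_cast
    rw [Real.log_mul (by norm_num) (ne_of_gt hN0)]
  rw [odd_harm]
  push_cast at hlog2N ⊢
  rw [hlog2N]
  field_simp
  ring

theorem term_bounds (N n : ℕ) (hn : n ∈ Finset.Icc 1 N) :
    (2*(N:ℝ)/Real.pi) * (2*(n:ℝ)-1)⁻¹ - 1
      ≤ (Real.sqrt (3 - 4 * Real.cos (Real.pi * (2 * (n : ℝ) - 1) / (2 * N)) +
          (Real.cos (Real.pi * (2 * (n : ℝ) - 1) / (2 * N))) ^ 2))⁻¹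
    ∧ (Real.sqrt (3 - 4 * Real.cos (Real.pi * (2 * (n : ℝ) - 1) / (2 * N)) +
          (Real.cos (Real.pi * (2 * (n : ℝ) - 1) / (2 * N))) ^ 2))⁻¹
      ≤ (2*(N:ℝ)/Real.pi) * (2*(n:ℝ)-1)⁻¹ + 1 := by
  simp only [Finset.mem_Icc] at hn
  obtain ⟨h1n, hnN⟩ := hn
  have h1n' : (1:ℝ) ≤ n := by exact_mod_cast h1n
  have hnN' : (n:ℝ) ≤ N := by exact_mod_cast hnN
  have hNpos : (0:ℝ) < N := by linarith
  have hc1 : (1:ℝ) ≤ 2*(n:ℝ)-1 := by linarith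
  have hc2 : 2*(n:ℝ)-1 ≤ 2*N := by linarith
  set θ : ℝ := Real.pi * (2 * (n : ℝ) - 1) / (2 * N) with hθ
  have hθpos : 0 < θ := div_pos (mul_pos Real.pi_pos (by linarith)) (by linarith)
  have hθle : θ ≤ Real.pi := by
    rw [hθ, div_le_iff₀ (by linarith)]
    nlinarith [Real.pi_pos]
  have hu0 : 0 < θ/2 := by linarith
  have hu2 : θ/2 ≤ Real.pi/2 := by linarith
  have hs : 0 ≤ Real.sin (θ/2) :=
    (Real.sin_pos_of_pos_of_lt_pi hu0 (by linarith [Real.pi_pos])).le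
  have heq : Real.sqrt (3 - 4 * Real.cos θ + (Real.cos θ)^2)
      = 2 * Real.sin (θ/2) * Real.sqrt (1 + Real.sin (θ/2)^2) := by
    set s := Real.sin (θ/2) with hsdef
    have hc : Real.cos θ = 1 - 2 * s^2 := by
      have e1 : Real.cos (2 * (θ/2)) = Real.cos (θ/2)^2 - Real.sin (θ/2)^2 := Real.cos_two_mul' _
      have e2 : Real.sin (θ/2)^2 + Real.cos (θ/2)^2 = 1 := Real.sin_sq_add_cos_sq _
      rw [show 2 * (θ/2) = θ by ring] at e1
      nlinarith [e1]
    rw [hc]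
    have h1 : (0:ℝ) ≤ 1 + s^2 := by positivity
    have e3 : 3 - 4 * (1 - 2*s^2) + (1 - 2*s^2)^2 = (2 * s * Real.sqrt (1+s^2))^2 := by
      have := Real.sq_sqrt h1
      nlinarith [this]
    rw [e3, Real.sqrt_sq (by positivity)]
  have hval : (2*(θ/2))⁻¹ = (2*(N:ℝ)/Real.pi) * (2*(n:ℝ)-1)⁻¹ := by
    rw [show 2*(θ/2) = θ by ring, hθ]
    have hcne : (2*(n:ℝ)-1) ≠ 0 := by linarith
    field_simp
  have hub := upper_bd (θ/2) hu0 hu2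
  have hlb := lower_bd (θ/2) hu0 hu2
  rw [hval] at hub hlb
  rw [heq]
  exact ⟨hlb, hub⟩

/-- `lim_{N→∞} (1/(N ln N)) ∑_{n=1}^{N} (3 − 4cos θ_n + cos²θ_n)^{−1/2} = 1/π`, where
`θ_n = π(2n−1)/(2N)`. -/
theorem stmt9 :
    Tendsto (fun N : ℕ =>
        (1 / ((N : ℝ) * Real.log N)) *
          ∑ n ∈ Finset.Icc 1 N,
            (Real.sqrt (3 - 4 * Real.cos (Real.pi * (2 * (n : ℝ) - 1) / (2 * N)) +
              (Real.cos (Real.pi * (2 * (n : ℝ) - 1) / (2 * N))) ^ 2))⁻¹)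
      atTop (nhds (1 / Real.pi)) := by
  have hlog : Tendsto (fun N : ℕ => Real.log N) atTop atTop :=
    Real.tendsto_log_atTop.comp tendsto_natCast_atTop_atTop
  have hinvlog : Tendsto (fun N : ℕ => (Real.log N)⁻¹) atTop (nhds 0) :=
    tendsto_inv_atTop_zero.comp hlog
  have hg : Tendsto (fun N : ℕ => (2/Real.pi) *
      ((∑ n ∈ Finset.Icc 1 N, (2*(n:ℝ)-1)⁻¹) / Real.log N)) atTop
      (nhds ((2/Real.pi) * (1/2))) := odd_harm_log.const_mul _
  have hval : (2/Real.pi) * (1/2) = 1/Real.pi := by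
    field_simp
  rw [hval] at hg
  have hlo : Tendsto (fun N : ℕ => (2/Real.pi) *
      ((∑ n ∈ Finset.Icc 1 N, (2*(n:ℝ)-1)⁻¹) / Real.log N) - (Real.log N)⁻¹) atTop
      (nhds (1/Real.pi)) := by
    have := hg.sub hinvlog
    rwa [sub_zero] at this
  have hhi : Tendsto (fun N : ℕ => (2/Real.pi) *
      ((∑ n ∈ Finset.Icc 1 N, (2*(n:ℝ)-1)⁻¹) / Real.log N) + (Real.log N)⁻¹) atTop
      (nhds (1/Real.pi)) := by
    have := hg.add hinvlog
    rwa [add_zero] at this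
  apply tendsto_of_tendsto_of_tendsto_of_le_of_le' hlo hhi
  · filter_upwards [eventually_ge_atTop 2] with N hN2
    have hN1 : (1:ℝ) < N := by exact_mod_cast Nat.lt_of_lt_of_le one_lt_two hN2
    have hNpos : (0:ℝ) < N := by linarith
    have hlogpos : 0 < Real.log N := Real.log_pos hN1
    have h1 : ∑ n ∈ Finset.Icc 1 N, ((2*(N:ℝ)/Real.pi) * (2*(n:ℝ)-1)⁻¹ - 1)
        ≤ ∑ n ∈ Finset.Icc 1 N,
            (Real.sqrt (3 - 4 * Real.cos (Real.pi * (2 * (n : ℝ) - 1) / (2 * N)) +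
              (Real.cos (Real.pi * (2 * (n : ℝ) - 1) / (2 * N))) ^ 2))⁻¹ :=
      Finset.sum_le_sum fun n hn => (term_bounds N n hn).1
    have h2 : ∑ n ∈ Finset.Icc 1 N, ((2*(N:ℝ)/Real.pi) * (2*(n:ℝ)-1)⁻¹ - 1)
        = (2*(N:ℝ)/Real.pi) * (∑ n ∈ Finset.Icc 1 N, (2*(n:ℝ)-1)⁻¹) - N := by
      rw [Finset.sum_sub_distrib, ← Finset.mul_sum, Finset.sum_const, Nat.card_Icc]
      simp
    have h3 : (1 / ((N : ℝ) * Real.log N)) *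
          ((2*(N:ℝ)/Real.pi) * (∑ n ∈ Finset.Icc 1 N, (2*(n:ℝ)-1)⁻¹) - N)
        ≤ (1 / ((N : ℝ) * Real.log N)) *
          ∑ n ∈ Finset.Icc 1 N,
            (Real.sqrt (3 - 4 * Real.cos (Real.pi * (2 * (n : ℝ) - 1) / (2 * N)) +
              (Real.cos (Real.pi * (2 * (n : ℝ) - 1) / (2 * N))) ^ 2))⁻¹ := by
      apply mul_le_mul_of_nonneg_left _ (by positivity)
      rw [← h2]; exact h1
    refine le_trans (le_of_eq ?_) h3
    have hπ := Real.pi_ne_zero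
    field_simp
  · filter_upwards [eventually_ge_atTop 2] with N hN2
    have hN1 : (1:ℝ) < N := by exact_mod_cast Nat.lt_of_lt_of_le one_lt_two hN2
    have hNpos : (0:ℝ) < N := by linarith
    have hlogpos : 0 < Real.log N := Real.log_pos hN1
    have h1 : ∑ n ∈ Finset.Icc 1 N,
            (Real.sqrt (3 - 4 * Real.cos (Real.pi * (2 * (n : ℝ) - 1) / (2 * N)) +
              (Real.cos (Real.pi * (2 * (n : ℝ) - 1) / (2 * N))) ^ 2))⁻¹
        ≤ ∑ n ∈ Finset.Icc 1 N, ((2*(N:ℝ)/Real.pi) * (2*(n:ℝ)-1)⁻¹ + 1) :=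
      Finset.sum_le_sum fun n hn => (term_bounds N n hn).2
    have h2 : ∑ n ∈ Finset.Icc 1 N, ((2*(N:ℝ)/Real.pi) * (2*(n:ℝ)-1)⁻¹ + 1)
        = (2*(N:ℝ)/Real.pi) * (∑ n ∈ Finset.Icc 1 N, (2*(n:ℝ)-1)⁻¹) + N := by
      rw [Finset.sum_add_distrib, ← Finset.mul_sum, Finset.sum_const, Nat.card_Icc]
      simp
    have h3 : (1 / ((N : ℝ) * Real.log N)) *
          ∑ n ∈ Finset.Icc 1 N,
            (Real.sqrt (3 - 4 * Real.cos (Real.pi * (2 * (n : ℝ) - 1) / (2 * N)) +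
              (Real.cos (Real.pi * (2 * (n : ℝ) - 1) / (2 * N))) ^ 2))⁻¹
        ≤ (1 / ((N : ℝ) * Real.log N)) *
          ((2*(N:ℝ)/Real.pi) * (∑ n ∈ Finset.Icc 1 N, (2*(n:ℝ)-1)⁻¹) + N) := by
      apply mul_le_mul_of_nonneg_left _ (by positivity)
      rw [← h2]; exact h1
    refine le_trans h3 (le_of_eq ?_)
    have hπ := Real.pi_ne_zero
    field_simp
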